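/- arXiv:1907.08865 — 2 statements merged into one kernel-verified Lean document; each statement's English description precedes it below -/
import Mathlib

section
/- Let $n > 1$. A vertex-colored graph $(G,\sigma)$ is an $(n-1)$-hc-cograph if and only if $(G+x,\sigma')$ is an $n$-hc-cograph, where $G+x$ is obtained from $G$ by adding a new vertex $x$ adjacent to all vertices of $G$, and $\sigma'(v) = \sigma(v)$ for all vertices $v$ of $G$ while $\sigma'(x) \neq \sigma(v)$ for all vertices $v$ of $G$ (i.e., $x$ receives a fresh color). -/
namespace RBMGPaper

variable {V : Type*} {C : Type*}

/-- `HCOn G σ A` asserts that the subgraph of the vertex-colored graph `(G, σ)` induced on the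
vertex set `A` is a hierarchically colored cograph, built recursively via (K1)–(K3). -/
inductive HCOn (G : SimpleGraph V) (σ : V → C) : Set V → Prop
  | single (v : V) : HCOn G σ {v}
  | join (A B : Set V) (hA : A.Nonempty) (hB : B.Nonempty) (hdisj : Disjoint A B)
      (hadj : ∀ a ∈ A, ∀ b ∈ B, G.Adj a b)
      (hcol : Disjoint (σ '' A) (σ '' B))
      (h1 : HCOn G σ A) (h2 : HCOn G σ B) : HCOn G σ (A ∪ B)
  | union (A B : Set V) (hA : A.Nonempty) (hB : B.Nonempty) (hdisj : Disjoint A B)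
      (hadj : ∀ a ∈ A, ∀ b ∈ B, ¬ G.Adj a b)
      (hcol : σ '' A ⊆ σ '' B ∨ σ '' B ⊆ σ '' A)
      (h1 : HCOn G σ A) (h2 : HCOn G σ B) : HCOn G σ (A ∪ B)

/-- `(G, σ)` is a hierarchically colored cograph (hc-cograph). -/
def IsHCCograph (G : SimpleGraph V) (σ : V → C) : Prop :=
  HCOn G σ Set.univ

/-- `CographOn G A` asserts that the subgraph of `G` induced on `A` is a cograph. -/
inductive CographOn (G : SimpleGraph V) : Set V → Prop
  | single (v : V) : CographOn G {v}
  | union (A B : Set V) (hA : A.Nonempty) (hB : B.Nonempty) (hdisj : Disjoint A B)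
      (hadj : ∀ a ∈ A, ∀ b ∈ B, ¬ G.Adj a b)
      (h1 : CographOn G A) (h2 : CographOn G B) : CographOn G (A ∪ B)
  | join (A B : Set V) (hA : A.Nonempty) (hB : B.Nonempty) (hdisj : Disjoint A B)
      (hadj : ∀ a ∈ A, ∀ b ∈ B, G.Adj a b)
      (h1 : CographOn G A) (h2 : CographOn G B) : CographOn G (A ∪ B)

/-- `G` is a cograph. -/
def IsCograph (G : SimpleGraph V) : Prop := CographOn G Set.univ

/-- The set `s` induces a biclique (complete bipartite graph, possibly `K₁`) in `G`. -/
def IsBiclique (G : SimpleGraph V) (s : Set V) : Prop :=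
  ∃ A B : Set V, s = A ∪ B ∧ Disjoint A B ∧
    ∀ u ∈ s, ∀ v ∈ s, (G.Adj u v ↔ ((u ∈ A ∧ v ∈ B) ∨ (u ∈ B ∧ v ∈ A)))

/-- `G` is a bicluster graph: every connected component is a biclique. -/
def IsBiclusterGraph (G : SimpleGraph V) : Prop :=
  ∀ c : G.ConnectedComponent, IsBiclique G c.supp

/-- `addHub G` is the graph `G + x`: a new vertex (`none`) adjacent to all vertices of `G`. -/
def addHub (G : SimpleGraph V) : SimpleGraph (Option V) where
  Adj u v :=
    (∃ a b, u = some a ∧ v = some b ∧ G.Adj a b) ∨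
    (u = none ∧ ∃ b, v = some b) ∨ ((∃ a, u = some a) ∧ v = none)
  symm := by
    constructor
    rintro u v (⟨a, b, rfl, rfl, h⟩ | ⟨rfl, b, rfl⟩ | ⟨⟨a, rfl⟩, rfl⟩)
    · exact Or.inl ⟨b, a, rfl, rfl, h.symm⟩
    · exact Or.inr (Or.inr ⟨⟨b, rfl⟩, rfl⟩)
    · exact Or.inr (Or.inl ⟨rfl, a, rfl⟩)
  loopless := by
    constructor
    rintro u (⟨a, b, rfl, hb, h⟩ | ⟨rfl, b, hb⟩ | ⟨⟨a, rfl⟩, hb⟩)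
    · exact G.irrefl (Option.some_injective V hb ▸ h)
    · cases hb
    · cases hb


lemma addHub_adj_some {G : SimpleGraph V} {a b : V} :
    (addHub G).Adj (some a) (some b) ↔ G.Adj a b := by
  constructor
  · rintro (⟨a', b', ha, hb, h⟩ | ⟨h, _⟩ | ⟨_, h⟩)
    · cases Option.some_injective V ha; cases Option.some_injective V hb; exact h
    · cases h
    · cases h
  · intro h; exact Or.inl ⟨a, b, rfl, rfl, h⟩

lemma addHub_adj_none {G : SimpleGraph V} (b : V) : (addHub G).Adj none (some b) :=
  Or.inr (Or.inl ⟨rfl, b, rfl⟩)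

lemma elim_image_some {σ : V → C} {c₀ : C} (T : Set V) :
    (fun u : Option V => u.elim c₀ σ) '' (some '' T) = σ '' T := by
  rw [Set.image_image]
  rfl

lemma elim_image_preimage_sub {σ : V → C} {c₀ : C} (A : Set (Option V)) :
    σ '' (some ⁻¹' A) ⊆ (fun u : Option V => u.elim c₀ σ) '' A := by
  rintro c ⟨v, hv, rfl⟩
  exact ⟨some v, hv, rfl⟩

lemma elim_image_of_not_none {σ : V → C} {c₀ : C} {A : Set (Option V)}
    (h : none ∉ A) :
    (fun u : Option V => u.elim c₀ σ) '' A = σ '' (some ⁻¹' A) := by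
  apply Set.Subset.antisymm _ (elim_image_preimage_sub A)
  rintro c ⟨u, hu, rfl⟩
  match u with
  | none => exact absurd hu h
  | some v => exact ⟨v, hu, rfl⟩

lemma preimage_nonempty_of_not_none {A : Set (Option V)} (hA : A.Nonempty)
    (h : none ∉ A) : (some ⁻¹' A : Set V).Nonempty := by
  obtain ⟨u, hu⟩ := hA
  match u with
  | none => exact absurd hu h
  | some v => exact ⟨v, hu⟩

lemma preimage_nonempty_of_ne_singleton {A : Set (Option V)} (hA : A.Nonempty)
    (h : A ≠ {none}) : (some ⁻¹' A : Set V).Nonempty := by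
  by_cases hn : none ∈ A
  · by_contra hempty
    apply h
    apply Set.Subset.antisymm _ (by simpa using hn)
    intro u hu
    match u with
    | none => rfl
    | some v => exact absurd (⟨v, hu⟩ : (some ⁻¹' A : Set V).Nonempty) hempty
  · exact preimage_nonempty_of_not_none hA hn

/-- Forward: lifting an hc-decomposition through `some`. -/
lemma hcOn_some_image {G : SimpleGraph V} {σ : V → C} {c₀ : C}
    {T : Set V} (h : HCOn G σ T) :
    HCOn (addHub G) (fun u : Option V => u.elim c₀ σ) (some '' T) := by
  induction h with
  | single v =>
      simpa using HCOn.single (G := addHub G)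
        (σ := fun u : Option V => u.elim c₀ σ) (some v)
  | join A B hA hB hdisj hadj hcol h1 h2 ih1 ih2 =>
      rw [Set.image_union]
      refine HCOn.join _ _ (hA.image _) (hB.image _)
        (Set.disjoint_image_of_injective (Option.some_injective V) hdisj) ?_ ?_ ih1 ih2
      · rintro _ ⟨a, ha, rfl⟩ _ ⟨b, hb, rfl⟩
        exact addHub_adj_some.mpr (hadj a ha b hb)
      · rw [elim_image_some, elim_image_some]; exact hcol
  | union A B hA hB hdisj hadj hcol h1 h2 ih1 ih2 =>
      rw [Set.image_union]
      refine HCOn.union _ _ (hA.image _) (hB.image _)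
        (Set.disjoint_image_of_injective (Option.some_injective V) hdisj) ?_ ?_ ih1 ih2
      · rintro _ ⟨a, ha, rfl⟩ _ ⟨b, hb, rfl⟩ hadj'
        exact hadj a ha b hb (addHub_adj_some.mp hadj')
      · rw [elim_image_some, elim_image_some]; exact hcol

/-- Backward, hub-free part. -/
lemma hcOn_of_addHub_not_none {G : SimpleGraph V} {σ : V → C} {c₀ : C}
    {S : Set (Option V)} (h : HCOn (addHub G) (fun u : Option V => u.elim c₀ σ) S) :
    none ∉ S → HCOn G σ (some ⁻¹' S) := by
  induction h with
  | single v =>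
      intro hv
      match v with
      | none => exact absurd rfl hv
      | some w =>
          have : (some ⁻¹' ({some w} : Set (Option V)) : Set V) = {w} := by
            ext u; simp
          rw [this]; exact HCOn.single w
  | join A B hA hB hdisj hadj hcol h1 h2 ih1 ih2 =>
      intro hS
      have hnA : none ∉ A := fun h' => hS (Or.inl h')
      have hnB : none ∉ B := fun h' => hS (Or.inr h')
      rw [Set.preimage_union]
      refine HCOn.join _ _ (preimage_nonempty_of_not_none hA hnA)
        (preimage_nonempty_of_not_none hB hnB) (hdisj.preimage _) ?_ ?_ (ih1 hnA) (ih2 hnB)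
      · intro a ha b hb
        exact addHub_adj_some.mp (hadj _ ha _ hb)
      · rw [← elim_image_of_not_none (c₀ := c₀) hnA, ← elim_image_of_not_none (c₀ := c₀) hnB]
        exact hcol
  | union A B hA hB hdisj hadj hcol h1 h2 ih1 ih2 =>
      intro hS
      have hnA : none ∉ A := fun h' => hS (Or.inl h')
      have hnB : none ∉ B := fun h' => hS (Or.inr h')
      rw [Set.preimage_union]
      refine HCOn.union _ _ (preimage_nonempty_of_not_none hA hnA)
        (preimage_nonempty_of_not_none hB hnB) (hdisj.preimage _) ?_ ?_ (ih1 hnA) (ih2 hnB)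
      · intro a ha b hb hadj'
        exact hadj _ ha _ hb (addHub_adj_some.mpr hadj')
      · rw [← elim_image_of_not_none (c₀ := c₀) hnA, ← elim_image_of_not_none (c₀ := c₀) hnB]
        exact hcol

/-- Backward: stripping the hub from an hc-decomposition. -/
lemma hcOn_of_addHub {G : SimpleGraph V} {σ : V → C} {c₀ : C}
    {S : Set (Option V)} (h : HCOn (addHub G) (fun u : Option V => u.elim c₀ σ) S) :
    none ∈ S → S ≠ {none} → HCOn G σ (some ⁻¹' S) := by
  induction h with
  | single v =>
      intro hv hne
      have : v = none := by simpa using hv.symm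
      exact absurd (by rw [this]) hne
  | join A B hA hB hdisj hadj hcol h1 h2 ih1 ih2 =>
      intro hS hne
      have key : ∀ A B : Set (Option V), A.Nonempty → B.Nonempty → Disjoint A B →
          (∀ a ∈ A, ∀ b ∈ B, (addHub G).Adj a b) →
          Disjoint ((fun u : Option V => u.elim c₀ σ) '' A)
            ((fun u : Option V => u.elim c₀ σ) '' B) →
          HCOn (addHub G) (fun u : Option V => u.elim c₀ σ) B →
          (A ≠ {none} → HCOn G σ (some ⁻¹' A)) →
          (none ∉ B → HCOn G σ (some ⁻¹' B)) →
          none ∈ A → HCOn G σ (some ⁻¹' (A ∪ B)) := by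
        intro A B hA hB hdisj hadj hcol h2 ih1 ihB hnA
        have hnB : none ∉ B := fun h' => (Set.disjoint_left.mp hdisj hnA) h'
        rw [Set.preimage_union]
        by_cases hsing : A = {none}
        · have : (some ⁻¹' A : Set V) = ∅ := by
            subst hsing; ext u; simp
          rw [this, Set.empty_union]
          exact ihB hnB
        · refine HCOn.join _ _ (preimage_nonempty_of_ne_singleton hA hsing)
            (preimage_nonempty_of_not_none hB hnB) (hdisj.preimage _) ?_ ?_
            (ih1 hsing) (ihB hnB)
          · intro a ha b hb
            exact addHub_adj_some.mp (hadj _ ha _ hb)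
          · exact hcol.mono (elim_image_preimage_sub A) (elim_image_preimage_sub B)
      rcases hS with hnA | hnB
      · exact key A B hA hB hdisj hadj hcol h2
          (fun hs => ih1 hnA hs) (fun hs => hcOn_of_addHub_not_none h2 hs) hnA
      · rw [Set.union_comm]
        exact key B A hB hA hdisj.symm (fun b hb a ha => (hadj a ha b hb).symm) hcol.symm h1
          (fun hs => ih2 hnB hs) (fun hs => hcOn_of_addHub_not_none h1 hs) hnB
  | union A B hA hB hdisj hadj hcol h1 h2 ih1 ih2 =>
      intro hS hne
      exfalso
      rcases hS with hnA | hnB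
      · obtain ⟨b, hb⟩ := hB
        have hbB : b ≠ none := fun h' => Set.disjoint_right.mp hdisj hb (h' ▸ hnA)
        obtain ⟨v, rfl⟩ := Option.ne_none_iff_exists'.mp hbB
        exact hadj _ hnA _ hb (addHub_adj_none v)
      · obtain ⟨a, ha⟩ := hA
        have haA : a ≠ none := fun h' => Set.disjoint_left.mp hdisj ha (h' ▸ hnB)
        obtain ⟨v, rfl⟩ := Option.ne_none_iff_exists'.mp haA
        exact hadj _ ha _ hnB ((addHub_adj_none v).symm)

lemma range_elim {σ : V → C} {c₀ : C} :
    Set.range (fun u : Option V => u.elim c₀ σ) = insert c₀ (Set.range σ) := by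
  ext c
  constructor
  · rintro ⟨u, rfl⟩
    match u with
    | none => exact Or.inl rfl
    | some v => exact Or.inr ⟨v, rfl⟩
  · rintro (rfl | ⟨v, rfl⟩)
    · exact ⟨none, rfl⟩
    · exact ⟨some v, rfl⟩

/-- Let `n > 1`.  Then `(G, σ)` is an `(n-1)`-hc-cograph if and only if
`(G + x, σ')` is an `n`-hc-cograph, where `G + x` adds a new hub-vertex `x` (here `none`) and
`σ'` extends `σ` by giving `x` a fresh color `c₀ ∉ range σ`. -/
theorem hcCograph_iff_addHub_hcCograph [Fintype V] (n : ℕ) (hn : 1 < n)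
    (G : SimpleGraph V) (σ : V → C) (c₀ : C) (hc₀ : c₀ ∉ Set.range σ) :
    (IsHCCograph G σ ∧ (Set.range σ).ncard = n - 1) ↔
      (IsHCCograph (addHub G) (fun u => u.elim c₀ σ) ∧
        (Set.range (fun u : Option V => u.elim c₀ σ)).ncard = n) := by
  have hfin : (Set.range σ).Finite := Set.finite_range σ
  have hcard : (Set.range (fun u : Option V => u.elim c₀ σ)).ncard
      = (Set.range σ).ncard + 1 := by
    rw [range_elim, Set.ncard_insert_of_notMem hc₀ hfin]
  constructor
  · rintro ⟨hG, hn1⟩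
    have hVne : Nonempty V := by
      by_contra hV
      rw [not_nonempty_iff] at hV
      have : Set.range σ = ∅ := Set.range_eq_empty σ
      rw [this, Set.ncard_empty] at hn1
      omega
    refine ⟨?_, by rw [hcard, hn1]; omega⟩
    have huniv : ({none} : Set (Option V)) ∪ (some '' Set.univ) = Set.univ := by
      ext u
      match u with
      | none => simp
      | some v => simp
    unfold IsHCCograph
    rw [← huniv]
    refine HCOn.join _ _ ⟨none, rfl⟩ ((Set.univ_nonempty).image _) ?_ ?_ ?_
      (HCOn.single none) (hcOn_some_image hG)
    · rw [Set.disjoint_left]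
      rintro _ rfl ⟨v, _, hv⟩
      cases hv
    · rintro _ rfl _ ⟨b, _, rfl⟩
      exact addHub_adj_none b
    · rw [Set.image_singleton, elim_image_some]
      rw [Set.disjoint_left]
      rintro _ rfl ⟨v, _, hv⟩
      exact hc₀ ⟨v, hv⟩
  · rintro ⟨hG, hn⟩
    have hranne : (Set.range σ).Nonempty := by
      by_contra hR
      rw [Set.not_nonempty_iff_eq_empty] at hR
      rw [hR, Set.ncard_empty] at hcard
      omega
    obtain ⟨_, v, _⟩ := hranne
    have hne : (Set.univ : Set (Option V)) ≠ {none} := by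
      intro h
      have : (some v : Option V) ∈ ({none} : Set (Option V)) := h ▸ Set.mem_univ _
      simp at this
    have := hcOn_of_addHub hG (Set.mem_univ none) hne
    rw [Set.preimage_univ] at this
    exact ⟨this, by omega⟩

end RBMGPaper
end

section
/- Let $G = (V,E)$ be a bipartite graph with bipartition $V_1 \mathbin{\dot\cup} V_2$, and let $F$ be the set of all nonadjacent unordered pairs $\{u,v\}$ with $u \in V_1$, $v \in V_2$ such that $u$ and $v$ lie in the same connected component of $G$. Then the graph $G \cup F$ obtained by adding all pairs in $F$ as edges is a bicluster graph, and every set $F'$ of unordered pairs from $V_1 \otimes V_2$ disjoint from $E$ such that $G \cup F'$ is a bicluster graph satisfies $F \subseteq F'$; hence $F$ is the unique minimum-cardinality bicluster completion set of $G$. -/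
namespace RBMGPaper

variable {V : Type*} {C : Type*}

lemma reach_aux {G G2 : SimpleGraph V}
    (h : ∀ u v, G2.Adj u v → G.Reachable u v) {u v : V} (hr : G2.Reachable u v) :
    G.Reachable u v := by
  obtain ⟨p⟩ := hr
  induction p with
  | nil => exact SimpleGraph.Reachable.refl _
  | cons ha _ ih => exact (h _ _ ha).trans ih

lemma walk_invariant (G G'' : SimpleGraph V) (hle : G ≤ G'') (V1 V2 A B S : Set V)
    (hdisj : Disjoint V1 V2) (hAB : Disjoint A B)
    (hbip : ∀ u v : V, G.Adj u v → (u ∈ V1 ∧ v ∈ V2) ∨ (u ∈ V2 ∧ v ∈ V1))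
    (hS : ∀ x y : V, x ∈ S → G''.Adj x y → y ∈ S)
    (hadj : ∀ u ∈ S, ∀ v ∈ S, G''.Adj u v → (u ∈ A ∧ v ∈ B) ∨ (u ∈ B ∧ v ∈ A)) :
    ∀ {x y : V} (_ : G.Walk x y), x ∈ S →
      ((x ∈ V1 ∧ x ∈ A) ∨ (x ∈ V2 ∧ x ∈ B)) →
      ((y ∈ V1 ∧ y ∈ A) ∨ (y ∈ V2 ∧ y ∈ B)) := by
  intro x y p
  induction p with
  | nil => exact fun _ h => h
  | @cons x z y h p ih =>
    intro hxS hx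
    have hzS : z ∈ S := hS x z hxS (hle h)
    have hbc := hbip _ _ h
    have habc := hadj _ hxS _ hzS (hle h)
    rcases hx with ⟨hx1, hxA⟩ | ⟨hx2, hxB⟩
    · have hz2 : z ∈ V2 := by
        rcases hbc with ⟨_, h2⟩ | ⟨h2, _⟩
        · exact h2
        · exact absurd h2 (Set.disjoint_left.mp hdisj hx1)
      have hzB : z ∈ B := by
        rcases habc with ⟨_, h2⟩ | ⟨h2, _⟩
        · exact h2
        · exact absurd h2 (Set.disjoint_left.mp hAB hxA)
      exact ih hzS (Or.inr ⟨hz2, hzB⟩)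
    · have hz1 : z ∈ V1 := by
        rcases hbc with ⟨h2, _⟩ | ⟨_, h2⟩
        · exact absurd h2 (Set.disjoint_right.mp hdisj hx2)
        · exact h2
      have hzA : z ∈ A := by
        rcases habc with ⟨h2, _⟩ | ⟨_, h2⟩
        · exact absurd h2 (Set.disjoint_right.mp hAB hxB)
        · exact h2
      exact ih hzS (Or.inl ⟨hz1, hzA⟩)



/-- Let `G` be a bipartite graph with bipartition `V1 ∪ V2` and let `F` be the
set of all nonadjacent cross pairs lying in a common connected component of `G`.  Then `G ∪ F`
is a bicluster graph, every cross-pair completion set `F'` (disjoint from the edges) with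
`G ∪ F'` a bicluster graph satisfies `F ⊆ F'`, and `F` is the unique minimum-cardinality
bicluster completion set of `G`. -/
theorem bicluster_completion [Fintype V] (G : SimpleGraph V) (V1 V2 : Set V)
    (hpart : V1 ∪ V2 = Set.univ) (hdisj : Disjoint V1 V2)
    (hbip : ∀ u v : V, G.Adj u v → (u ∈ V1 ∧ v ∈ V2) ∨ (u ∈ V2 ∧ v ∈ V1))
    (F : Set (Sym2 V))
    (hF : F = {e : Sym2 V | ∃ u ∈ V1, ∃ v ∈ V2,
      e = s(u, v) ∧ ¬ G.Adj u v ∧ G.Reachable u v}) :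
    IsBiclusterGraph (SimpleGraph.fromEdgeSet (G.edgeSet ∪ F)) ∧
    (∀ F' : Set (Sym2 V),
      (∀ e ∈ F', (∃ u ∈ V1, ∃ v ∈ V2, e = s(u, v)) ∧ e ∉ G.edgeSet) →
      IsBiclusterGraph (SimpleGraph.fromEdgeSet (G.edgeSet ∪ F')) → F ⊆ F') ∧
    (∀ F' : Set (Sym2 V),
      (∀ e ∈ F', (∃ u ∈ V1, ∃ v ∈ V2, e = s(u, v)) ∧ e ∉ G.edgeSet) →
      IsBiclusterGraph (SimpleGraph.fromEdgeSet (G.edgeSet ∪ F')) →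
      F'.ncard ≤ F.ncard → F' = F) := by

  have hne12 : ∀ {u v : V}, u ∈ V1 → v ∈ V2 → u ≠ v := fun hu hv h =>
    Set.disjoint_left.mp hdisj hu (h ▸ hv)
  set G' := SimpleGraph.fromEdgeSet (G.edgeSet ∪ F) with hG'
  have hGle : G ≤ G' := by
    intro u v h
    exact (SimpleGraph.fromEdgeSet_adj _).mpr ⟨Or.inl h, h.ne⟩
  have hadj' : ∀ u v : V, G'.Adj u v ↔
      (((u ∈ V1 ∧ v ∈ V2) ∨ (u ∈ V2 ∧ v ∈ V1)) ∧ G.Reachable u v) := by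
    intro u v
    rw [hG', SimpleGraph.fromEdgeSet_adj]
    constructor
    · rintro ⟨hm | hm, hne⟩
      · have h : G.Adj u v := (SimpleGraph.mem_edgeSet _).mp hm
        exact ⟨hbip _ _ h, h.reachable⟩
      · rw [hF] at hm
        obtain ⟨a, ha, b, hb, heq, hnadj, hre⟩ := hm
        rcases Sym2.eq_iff.mp heq with ⟨rfl, rfl⟩ | ⟨rfl, rfl⟩
        · exact ⟨Or.inl ⟨ha, hb⟩, hre⟩
        · exact ⟨Or.inr ⟨hb, ha⟩, hre.symm⟩
    · rintro ⟨hcross, hre⟩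
      have hne : u ≠ v := by
        rcases hcross with ⟨h1, h2⟩ | ⟨h1, h2⟩
        · exact hne12 h1 h2
        · exact (hne12 h2 h1).symm
      refine ⟨?_, hne⟩
      by_cases hA : G.Adj u v
      · exact Or.inl ((SimpleGraph.mem_edgeSet _).mpr hA)
      · refine Or.inr ?_
        rw [hF]
        rcases hcross with ⟨h1, h2⟩ | ⟨h1, h2⟩
        · exact ⟨u, h1, v, h2, rfl, hA, hre⟩
        · exact ⟨v, h2, u, h1, Sym2.eq_swap, fun h => hA h.symm, hre.symm⟩
  have hreach' : ∀ u v : V, G'.Reachable u v ↔ G.Reachable u v := by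
    intro u v
    constructor
    · exact reach_aux (fun a b h => ((hadj' a b).mp h).2)
    · exact fun h => h.mono hGle
  have part1 : IsBiclusterGraph G' := by
    intro c
    refine ⟨c.supp ∩ V1, c.supp ∩ V2, ?_, ?_, ?_⟩
    · rw [← Set.inter_union_distrib_left, hpart, Set.inter_univ]
    · exact hdisj.mono Set.inter_subset_right Set.inter_subset_right
    · intro u hu v hv
      have hsupprea : G.Reachable u v := by
        rw [SimpleGraph.ConnectedComponent.mem_supp_iff] at hu hv
        exact (hreach' u v).mp (SimpleGraph.ConnectedComponent.exact (hu.trans hv.symm))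
      rw [hadj' u v]
      constructor
      · rintro ⟨⟨h1, h2⟩ | ⟨h1, h2⟩, _⟩
        · exact Or.inl ⟨⟨hu, h1⟩, ⟨hv, h2⟩⟩
        · exact Or.inr ⟨⟨hu, h1⟩, ⟨hv, h2⟩⟩
      · rintro (⟨⟨_, h1⟩, ⟨_, h2⟩⟩ | ⟨⟨_, h1⟩, ⟨_, h2⟩⟩)
        · exact ⟨Or.inl ⟨h1, h2⟩, hsupprea⟩
        · exact ⟨Or.inr ⟨h1, h2⟩, hsupprea⟩
  have part2 : ∀ F' : Set (Sym2 V),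
      (∀ e ∈ F', (∃ u ∈ V1, ∃ v ∈ V2, e = s(u, v)) ∧ e ∉ G.edgeSet) →
      IsBiclusterGraph (SimpleGraph.fromEdgeSet (G.edgeSet ∪ F')) → F ⊆ F' := by
    intro F' _ hbic e he
    rw [hF] at he
    obtain ⟨u, hu, v, hv, rfl, hnadj, hreach⟩ := he
    set G'' := SimpleGraph.fromEdgeSet (G.edgeSet ∪ F') with hG''
    have hle'' : G ≤ G'' := by
      intro a b h
      exact (SimpleGraph.fromEdgeSet_adj _).mpr ⟨Or.inl h, h.ne⟩
    set c := G''.connectedComponentMk u with hc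
    obtain ⟨A, B, hAB, hABdisj, hiff⟩ := hbic c
    have hS : ∀ x y : V, x ∈ c.supp → G''.Adj x y → y ∈ c.supp := by
      intro x y hx hxy
      rw [SimpleGraph.ConnectedComponent.mem_supp_iff] at hx ⊢
      rw [← hx]
      exact (SimpleGraph.ConnectedComponent.connectedComponentMk_eq_of_adj hxy).symm
    have huS : u ∈ c.supp := rfl
    have hvS : v ∈ c.supp := by
      rw [SimpleGraph.ConnectedComponent.mem_supp_iff]
      exact (SimpleGraph.ConnectedComponent.sound (hreach.mono hle'')).symm
    have huAB : u ∈ A ∪ B := hAB ▸ huS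
    obtain ⟨p⟩ := hreach
    have hadjG'' : G''.Adj u v := by
      rcases huAB with huA | huB
      · have := walk_invariant G G'' hle'' V1 V2 A B c.supp hdisj hABdisj hbip hS
          (fun a ha b hb hab => (hiff a ha b hb).mp hab) p huS (Or.inl ⟨hu, huA⟩)
        rcases this with ⟨h1, _⟩ | ⟨_, h2⟩
        · exact absurd h1 (Set.disjoint_right.mp hdisj hv)
        · exact (hiff u huS v hvS).mpr (Or.inl ⟨huA, h2⟩)
      · have := walk_invariant G G'' hle'' V1 V2 B A c.supp hdisj hABdisj.symm hbip hS
          (fun a ha b hb hab => ((hiff a ha b hb).mp hab).symm) p huS (Or.inl ⟨hu, huB⟩)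
        rcases this with ⟨h1, _⟩ | ⟨_, h2⟩
        · exact absurd h1 (Set.disjoint_right.mp hdisj hv)
        · exact (hiff u huS v hvS).mpr (Or.inr ⟨huB, h2⟩)
    rcases (SimpleGraph.fromEdgeSet_adj _).mp hadjG'' with ⟨hm | hm, _⟩
    · exact absurd ((SimpleGraph.mem_edgeSet _).mp hm) hnadj
    · exact hm
  refine ⟨part1, part2, ?_⟩
  intro F' hcond hbic hcard
  have hsub : F ⊆ F' := part2 F' hcond hbic
  exact (Set.eq_of_subset_of_ncard_le hsub hcard (Set.toFinite F')).symm


end RBMGPaper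
end
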